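/- arXiv:1210.7885 — 2 statements merged into one kernel-verified Lean document; each statement's English description precedes it below -/
import Mathlib

section
/- There exists a real number ε > 0 such that the set of totally real algebraic numbers α (i.e., algebraic numbers whose minimal polynomial over ℚ splits over ℝ) with h(α) < ε is finite. In particular, every totally real algebraic number other than 0, 1, −1, with at most finitely many exceptions of height at least some fixed positive bound, has Weil height bounded below by a positive absolute constant. -/
open Polynomial

/-- The positive leading coefficient `a` of the integer minimal polynomial of an algebraic
number: the least positive integer `n` such that `n * minpoly ℚ α` has integer
coefficients. -/
noncomputable def intLeadCoeff (α : ℂ) : ℕ :=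
  sInf {n : ℕ | 0 < n ∧ ∀ k, ((n : ℚ) * (minpoly ℚ α).coeff k).den = 1}

/-- The absolute logarithmic Weil height of an algebraic number `α ∈ ℂ` of degree `d`, whose
minimal polynomial over `ℤ` is `a • ∏ (X - αᵢ)`:
`h(α) = (1/d) * (log a + ∑ᵢ log max (1, |αᵢ|))`. -/
noncomputable def weilHeight (α : ℂ) : ℝ :=
  (1 / (minpoly ℚ α).natDegree) *
    (Real.log (intLeadCoeff α) +
      (((minpoly ℚ α).map (algebraMap ℚ ℂ)).roots.map
        fun z => Real.log (max 1 ‖z‖)).sum)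

lemma den_mul_eq_one {q : ℚ} {n : ℕ} (h : q.den ∣ n) : ((n : ℚ) * q).den = 1 := by
  obtain ⟨c, rfl⟩ := h
  have hq : (q.den : ℚ) * q = (q.num : ℚ) := Rat.den_mul_eq_num q
  have : ((q.den * c : ℕ) : ℚ) * q = ((c * q.num : ℤ) : ℚ) := by
    push_cast
    rw [mul_comm (q.den : ℚ) (c : ℚ), mul_assoc, hq]
  rw [this, Rat.den_intCast]

lemma key_ineq (b : ℝ) : 27 * (b * (b ^ 2 - 1)) ^ 2 ≤ 4 * (max 1 |b|) ^ 8 := by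
  rcases le_total |b| 1 with h | h
  · rw [max_eq_left h]
    have hb2 : b ^ 2 ≤ 1 := by nlinarith [sq_abs b, abs_nonneg b]
    nlinarith [mul_nonneg (sq_nonneg (3 * b ^ 2 - 1)) (by nlinarith : (0:ℝ) ≤ 4 - 3 * b ^ 2)]
  · rw [max_eq_right h]
    have hb2 : 1 ≤ b ^ 2 := by nlinarith [sq_abs b]
    have habs : |b| ^ 8 = b ^ 8 := by
      rw [← abs_pow]; exact abs_of_nonneg (by positivity)
    rw [habs]
    nlinarith [mul_nonneg (mul_nonneg (sq_nonneg b) (sq_nonneg (b ^ 2 - 3)))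
      (by nlinarith : (0:ℝ) ≤ 4 * b ^ 2 - 3)]

lemma sum_log_prod (f : ℝ → ℝ) (hf : ∀ b, 1 ≤ f b) (B : Multiset ℝ) :
    (B.map fun b => Real.log (f b)).sum = Real.log ((B.map f).prod) := by
  induction B using Multiset.induction_on with
  | empty => simp
  | cons a s ih =>
    have h1 : (1:ℝ) ≤ (s.map f).prod :=
      Multiset.one_le_prod (by intro x hx; obtain ⟨b, _, rfl⟩ := Multiset.mem_map.mp hx; exact hf b)
    rw [Multiset.map_cons, Multiset.map_cons, Multiset.sum_cons, Multiset.prod_cons,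
      Real.log_mul (by linarith [hf a]) (by linarith), ih]

lemma height_lower_bound (α : ℂ) (hint : IsIntegral ℚ α)
    (hsp : ((minpoly ℚ α).map (algebraMap ℚ ℝ)).Splits)
    (h0 : α ≠ 0) (h1 : α ≠ 1) (hm1 : α ≠ -1) :
    Real.log (27/4) / 8 ≤ weilHeight α := by
  set p := minpoly ℚ α with hp
  have hp_monic : p.Monic := minpoly.monic hint
  have hp_irr : Irreducible p := minpoly.irreducible hint
  have hd : 0 < p.natDegree := minpoly.natDegree_pos hint
  -- no rational roots outside {0, 1, -1} exclusions
  have hroot : ∀ r : ℚ, p.eval r = 0 → α = (r : ℂ) := by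
    intro r hr
    have hdvd : (X - C r) ∣ p := dvd_iff_isRoot.mpr hr
    have hassoc : Associated (X - C r) p :=
      (irreducible_X_sub_C r).associated_of_dvd hp_irr hdvd
    have hpeq : p = X - C r :=
      ((eq_of_monic_of_associated (monic_X_sub_C r) hp_monic hassoc)).symm
    have := minpoly.aeval ℚ α
    rw [← hp, hpeq] at this
    simp only [map_sub, aeval_X, aeval_C] at this
    have : α = algebraMap ℚ ℂ r := by linear_combination this
    simpa using this
  have hne : ∀ j : ℤ, (j : ℂ) ≠ α → p.eval (j : ℚ) ≠ 0 := by
    intro j hj hc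
    exact hj ((hroot j hc).symm ▸ by push_cast; ring)
  -- the lead coefficient
  set a := intLeadCoeff α with haa
  have ha_mem : 0 < a ∧ ∀ k, ((a : ℚ) * p.coeff k).den = 1 := by
    have hnonempty : ∃ n : ℕ, 0 < n ∧ ∀ k, ((n : ℚ) * p.coeff k).den = 1 := by
      refine ⟨∏ k ∈ p.support, (p.coeff k).den, Finset.prod_pos fun k _ => (p.coeff k).pos, ?_⟩
      intro k
      by_cases hk : k ∈ p.support
      · exact den_mul_eq_one (Finset.dvd_prod_of_mem _ hk)
      · rw [notMem_support_iff.mp hk, mul_zero]; rfl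
    exact Nat.sInf_mem hnonempty
  obtain ⟨ha_pos, ha_den⟩ := ha_mem
  -- integer coefficients
  set m : ℕ → ℤ := fun k => ((a : ℚ) * p.coeff k).num with hmm
  have hm : ∀ k, (m k : ℚ) = (a : ℚ) * p.coeff k := fun k => (Rat.den_eq_one_iff _).mp (ha_den k)
  set K : ℤ → ℤ := fun j => ∑ k ∈ p.support, m k * j ^ k with hKK
  have hK : ∀ j : ℤ, (K j : ℚ) = (a : ℚ) * p.eval (j : ℚ) := by
    intro j
    rw [eval_eq_sum, sum_def, Finset.mul_sum]
    push_cast [hKK]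
    refine Finset.sum_congr rfl fun k _ => ?_
    rw [hm k]; ring
  have hKne : ∀ j : ℤ, (j : ℂ) ≠ α → K j ≠ 0 := by
    intro j hj hc
    have := hK j
    rw [hc] at this
    have hpe : p.eval (j : ℚ) = 0 := by
      have ha0 : ((a : ℚ)) ≠ 0 := by positivity
      field_simp at this
      exact (mul_eq_zero.mp (by exact_mod_cast this.symm)).resolve_left ha0
    exact hne j hj hpe
  -- real roots
  set q : ℝ[X] := p.map (algebraMap ℚ ℝ) with hqq
  set B : Multiset ℝ := q.roots with hBB
  have hq_monic : q.Monic := hp_monic.map _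
  have hq_splits : q.Splits := hsp
  have hq_eq : q = (B.map fun b => X - C b).prod :=
    hq_splits.eq_prod_roots_of_monic hq_monic
  have hcard : B.card = p.natDegree := hq_splits.natDegree_eq_card_roots.symm.trans (natDegree_map _)
  have heval : ∀ x : ℝ, q.eval x = (B.map fun b => x - b).prod := by
    intro x
    conv_lhs => rw [hq_eq]
    rw [eval_multiset_prod, Multiset.map_map]
    simp
  have hqj : ∀ j : ℚ, q.eval ((j : ℚ) : ℝ) = ((p.eval j : ℚ) : ℝ) := by
    intro j
    rw [hqq, eval_map]
    exact eval₂_at_apply (algebraMap ℚ ℝ) j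
  -- complex roots are the real roots
  have hmapc : p.map (algebraMap ℚ ℂ) = q.map (algebraMap ℝ ℂ) := by
    rw [hqq, map_map, ← IsScalarTower.algebraMap_eq]
  have hroots : (p.map (algebraMap ℚ ℂ)).roots = B.map (algebraMap ℝ ℂ) := by
    rw [hmapc, hq_splits.roots_map_of_injective (algebraMap ℝ ℂ).injective]
  have hsum : (((p.map (algebraMap ℚ ℂ)).roots).map
      fun z => Real.log (max 1 ‖z‖)).sum
      = (B.map fun b => Real.log (max 1 |b|)).sum := by
    rw [hroots, Multiset.map_map]
    congr 1
    ext b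
    simp [Function.comp, Complex.norm_real]
  -- the product inequality
  set M : ℝ := (B.map fun b => max 1 |b|).prod with hMM
  have hM1 : (1:ℝ) ≤ M :=
    Multiset.one_le_prod (by
      intro x hx
      obtain ⟨b, _, rfl⟩ := Multiset.mem_map.mp hx
      exact le_max_left 1 |b|)
  have hprod : (B.map fun b => 27 * (b * (b ^ 2 - 1)) ^ 2).prod
      ≤ (B.map fun b => 4 * (max 1 |b|) ^ 8).prod :=
    Multiset.prod_map_le_prod_map₀ _ _ (fun b _ => by positivity) (fun b _ => key_ineq b)
  have hlhs : (B.map fun b => 27 * (b * (b ^ 2 - 1)) ^ 2).prod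
      = 27 ^ B.card * ((q.eval 0) ^ 2 * ((q.eval 1) ^ 2 * (q.eval (-1)) ^ 2)) := by
    have hfun : (fun b : ℝ => 27 * (b * (b ^ 2 - 1)) ^ 2)
        = fun b : ℝ => 27 * ((0 - b) ^ 2 * ((1 - b) ^ 2 * ((-1) - b) ^ 2)) :=
      funext fun b => by ring
    rw [hfun, Multiset.prod_map_mul, Multiset.prod_map_mul, Multiset.prod_map_mul,
      Multiset.prod_map_pow, Multiset.prod_map_pow, Multiset.prod_map_pow,
      ← heval 0, ← heval 1, ← heval (-1)]
    congr 1
    rw [Multiset.map_const', Multiset.prod_replicate]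
  have hrhs : (B.map fun b => 4 * (max 1 |b|) ^ 8).prod = 4 ^ B.card * M ^ 8 := by
    rw [Multiset.prod_map_mul, Multiset.prod_map_pow, ← hMM]
    congr 1
    rw [Multiset.map_const', Multiset.prod_replicate]
  -- the integer values
  set n : ℤ := K 0 * (K 1 * K (-1)) with hnn
  have hn0 : n ≠ 0 := by
    refine mul_ne_zero (hKne 0 ?_) (mul_ne_zero (hKne 1 ?_) (hKne (-1) ?_)) <;>
      push_cast <;> [exact fun hc => h0 hc.symm; exact fun hc => h1 hc.symm;
        exact fun hc => hm1 hc.symm]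
  have hn1 : (1:ℝ) ≤ ((n:ℝ)) ^ 2 := by
    have h1n : (1:ℝ) ≤ |(n:ℝ)| := by exact_mod_cast Int.one_le_abs hn0
    nlinarith [abs_nonneg ((n:ℝ)), sq_abs ((n:ℝ))]
  have hcast : (a:ℝ) ^ 3 * (q.eval 0 * (q.eval 1 * q.eval (-1))) = (n:ℝ) := by
    have e0 : (a:ℝ) * q.eval 0 = ((K 0 : ℤ) : ℝ) := by
      have := hqj 0
      push_cast at this
      rw [this]
      exact_mod_cast (hK 0).symm
    have e1 : (a:ℝ) * q.eval 1 = ((K 1 : ℤ) : ℝ) := by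
      have := hqj 1
      push_cast at this
      rw [this]
      exact_mod_cast (hK 1).symm
    have em1 : (a:ℝ) * q.eval (-1) = ((K (-1) : ℤ) : ℝ) := by
      have := hqj (-1)
      push_cast at this
      rw [this]
      exact_mod_cast (hK (-1)).symm
    have : ((a:ℝ) * q.eval 0) * (((a:ℝ) * q.eval 1) * ((a:ℝ) * q.eval (-1))) = (n:ℝ) := by
      rw [e0, e1, em1, hnn]; push_cast; ring
    linear_combination this
  have ha1 : (1:ℝ) ≤ (a:ℝ) := by exact_mod_cast ha_pos
  -- main multiplicative bound
  have hmain : ((27:ℝ)/4) ^ p.natDegree ≤ ((a:ℝ) * M) ^ 8 := by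
    have step1 : (27:ℝ) ^ p.natDegree
        ≤ (a:ℝ) ^ 8 * (B.map fun b => 27 * (b * (b ^ 2 - 1)) ^ 2).prod := by
      rw [hlhs, hcard]
      have heq : (a:ℝ) ^ 8 * (27 ^ p.natDegree
          * ((q.eval 0) ^ 2 * ((q.eval 1) ^ 2 * (q.eval (-1)) ^ 2)))
          = 27 ^ p.natDegree * ((a:ℝ) ^ 2
            * ((a:ℝ) ^ 3 * (q.eval 0 * (q.eval 1 * q.eval (-1)))) ^ 2) := by ring
      rw [heq, hcast]
      have ha2 : (1:ℝ) ≤ (a:ℝ) ^ 2 := by nlinarith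
      have h27pos : (0:ℝ) < 27 ^ p.natDegree := by positivity
      have hone : (1:ℝ) ≤ (a:ℝ) ^ 2 * (n:ℝ) ^ 2 := by nlinarith
      calc (27:ℝ) ^ p.natDegree = 27 ^ p.natDegree * 1 := (mul_one _).symm
        _ ≤ 27 ^ p.natDegree * ((a:ℝ) ^ 2 * (n:ℝ) ^ 2) :=
            mul_le_mul_of_nonneg_left hone h27pos.le
    have step2 : (a:ℝ) ^ 8 * (B.map fun b => 27 * (b * (b ^ 2 - 1)) ^ 2).prod
        ≤ (a:ℝ) ^ 8 * (B.map fun b => 4 * (max 1 |b|) ^ 8).prod :=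
      mul_le_mul_of_nonneg_left hprod (by positivity)
    have step3 : (a:ℝ) ^ 8 * (B.map fun b => 4 * (max 1 |b|) ^ 8).prod
        = 4 ^ p.natDegree * ((a:ℝ) * M) ^ 8 := by
      rw [hrhs, hcard]; ring
    have h4 : (0:ℝ) < 4 ^ p.natDegree := by positivity
    rw [div_pow, div_le_iff₀ h4]
    calc (27:ℝ) ^ p.natDegree ≤ 4 ^ p.natDegree * ((a:ℝ) * M) ^ 8 := by
          rw [← step3]; exact le_trans step1 step2
      _ = ((a:ℝ) * M) ^ 8 * 4 ^ p.natDegree := by ring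
  -- take logarithms
  have hd' : (0:ℝ) < (p.natDegree : ℝ) := by exact_mod_cast hd
  have hlog : (p.natDegree : ℝ) * Real.log (27/4) ≤ 8 * Real.log ((a:ℝ) * M) := by
    have := Real.log_le_log (by positivity) hmain
    rwa [Real.log_pow, Real.log_pow] at this
  have hAM : Real.log ((a:ℝ) * M)
      = Real.log (a:ℝ) + (B.map fun b => Real.log (max 1 |b|)).sum := by
    rw [Real.log_mul (by positivity) (by linarith), hMM,
      sum_log_prod (fun b => max 1 |b|) (fun b => le_max_left 1 |b|) B]
  have hwh : weilHeight α = (1 / (p.natDegree : ℝ)) *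
      (Real.log (a:ℝ) + (B.map fun b => Real.log (max 1 |b|)).sum) := by
    rw [weilHeight, ← hp, ← haa, hsum]
  rw [hwh]
  have hkey : (p.natDegree : ℝ) * (Real.log (27/4) / 8)
      ≤ Real.log (a:ℝ) + (B.map fun b => Real.log (max 1 |b|)).sum := by
    rw [← hAM]; linarith
  have := mul_le_mul_of_nonneg_left hkey (le_of_lt (one_div_pos.mpr hd'))
  calc Real.log (27/4) / 8
      = (1 / (p.natDegree : ℝ)) * ((p.natDegree : ℝ) * (Real.log (27/4) / 8)) := by
        field_simp
    _ ≤ (1 / (p.natDegree : ℝ)) *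
        (Real.log (a:ℝ) + (B.map fun b => Real.log (max 1 |b|)).sum) := this

/-- There is an `ε > 0` such that only finitely many totally real algebraic numbers have
Weil height less than `ε`. -/
theorem totally_real_strong_bogomolov :
    ∃ ε : ℝ, 0 < ε ∧
      {α : ℂ | IsAlgebraic ℚ α ∧ ((minpoly ℚ α).map (algebraMap ℚ ℝ)).Splits ∧
        weilHeight α < ε}.Finite := by
  refine ⟨Real.log (27/4) / 8, by positivity, ?_⟩
  apply Set.Finite.subset (((Set.finite_singleton (-1:ℂ)).insert 1).insert 0)
  rintro α ⟨halg, hsp, hlt⟩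
  by_contra hmem
  simp only [Set.mem_insert_iff, Set.mem_singleton_iff, not_or] at hmem
  obtain ⟨h0, h1, hm1⟩ := hmem
  exact absurd hlt (not_lt.mpr (height_lower_bound α halg.isIntegral hsp h0 h1 hm1))
end

section
/- Let K be a field with algebraic closure Ω, let I be an index set, and for each i ∈ I let M_i be a field extension of K. Then the set L = {α ∈ Ω : for every i ∈ I, the minimal polynomial of α over K splits over M_i} is an intermediate field of the extension Ω/K, and L is a normal extension of K. -/
open Polynomial

lemma IntermediateField.mem_iInf' {K L : Type*} [Field K] [Field L] [Algebra K L]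
    {ι : Sort*} (S : ι → IntermediateField K L) (x : L) :
    x ∈ ⨅ j, S j ↔ ∀ j, x ∈ S j := by
  rw [← SetLike.mem_coe, IntermediateField.coe_iInf, Set.mem_iInter]
  rfl

lemma splits_of_algEquiv' {K A B : Type*} [Field K] [Field A] [Field B]
    [Algebra K A] [Algebra K B] (e : A ≃ₐ[K] B) {p : K[X]}
    (h : (p.map (algebraMap K A)).Splits) : (p.map (algebraMap K B)).Splits := by
  have h2 := h.map (e : A →+* B)
  rwa [Polynomial.map_map, show (e : A →+* B).comp (algebraMap K A) = algebraMap K B from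
    e.toAlgHom.comp_algebraMap] at h2

/-- Let `K` be a field with algebraic closure `Ω`, and for each `i` in an index set `I` let
`M i` be a field extension of `K`.  Then the set of `α ∈ Ω` whose minimal polynomial over
`K` splits over `M i` for every `i` is an intermediate field of `Ω/K`, and it is a normal
extension of `K`. -/
theorem totally_split_set_is_normal_intermediate_field
    (K Ω : Type*) [Field K] [Field Ω] [Algebra K Ω] [IsAlgClosure K Ω]
    (I : Type*) (M : I → Type*) [∀ i, Field (M i)] [∀ i, Algebra K (M i)] :
    ∃ L : IntermediateField K Ω,
      (L : Set Ω) = {α : Ω | ∀ i, ((minpoly K α).map (algebraMap K (M i))).Splits} ∧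
      Normal K L := by
  classical
  haveI : IsAlgClosed Ω := IsAlgClosure.isAlgClosed K
  haveI : Algebra.IsAlgebraic K Ω := IsAlgClosure.isAlgebraic
  -- embed the algebraic closure of `K` in `M i` into `Ω`
  let φ : ∀ i, algebraicClosure K (M i) →ₐ[K] Ω := fun i => IsAlgClosed.lift
  let E : I → IntermediateField K Ω := fun i => (φ i).fieldRange
  have key : ∀ (α : Ω) (i : I),
      ((minpoly K α).map (algebraMap K (M i))).Splits ↔
      ((minpoly K α).map (algebraMap K (E i))).Splits := by
    intro α i
    constructor
    · intro h
      exact splits_of_algEquiv' ((φ i).equivFieldRange) (Splits.algebraicClosure (E := M i) h)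
    · intro h
      have h1 : ((minpoly K α).map (algebraMap K (algebraicClosure K (M i)))).Splits :=
        splits_of_algEquiv' ((φ i).equivFieldRange).symm h
      have h2 := h1.map
        ((algebraicClosure K (M i)).val : _ →+* M i)
      rwa [Polynomial.map_map, show (((algebraicClosure K (M i)).val : _ →+* M i)).comp
          (algebraMap K (algebraicClosure K (M i))) = algebraMap K (M i) from
        (algebraicClosure K (M i)).val.comp_algebraMap] at h2
  -- characterize splitting over `E i` in terms of Galois conjugates
  have key2 : ∀ (α : Ω) (i : I),
      ((minpoly K α).map (algebraMap K (E i))).Splits ↔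
      ∀ σ : Ω ≃ₐ[K] Ω, σ α ∈ E i := by
    intro α i
    have hα : IsIntegral K α := Algebra.IsIntegral.isIntegral α
    rw [IntermediateField.splits_iff_mem (IsAlgClosed.splits ((minpoly K α).map (algebraMap K Ω)))]
    constructor
    · intro h σ
      refine h _ ?_
      rw [mem_rootSet]
      refine ⟨minpoly.ne_zero hα, ?_⟩
      rw [show (aeval (σ α)) (minpoly K α) = σ ((aeval α) (minpoly K α)) from
        aeval_algHom_apply σ α _, minpoly.aeval, map_zero]
    · intro h x hx
      rw [mem_rootSet] at hx
      obtain ⟨σ, hσ⟩ := minpoly.exists_algEquiv_of_root' hα.isAlgebraic hx.2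
      exact hσ ▸ h σ
  let L : IntermediateField K Ω := ⨅ i, ⨅ σ : Ω ≃ₐ[K] Ω, (E i).comap (σ : Ω →ₐ[K] Ω)
  have memL : ∀ α : Ω, α ∈ L ↔ ∀ i, ∀ σ : Ω ≃ₐ[K] Ω, σ α ∈ E i := by
    intro α
    rw [show (α ∈ L) ↔ _ from IntermediateField.mem_iInf' _ α]
    exact forall_congr' fun i => IntermediateField.mem_iInf' _ α
  refine ⟨L, ?_, ?_⟩
  · ext α
    rw [SetLike.mem_coe, memL, Set.mem_setOf_eq]
    exact forall_congr' fun i => ((key2 α i).symm.trans (key α i).symm)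
  · rw [IntermediateField.normal_iff_forall_map_le']
    intro σ x hx
    rw [← SetLike.mem_coe, IntermediateField.coe_map] at hx
    obtain ⟨y, hy, rfl⟩ := hx
    rw [SetLike.mem_coe, memL] at hy
    rw [memL]
    intro i τ
    have := hy i (σ.trans τ)
    simpa using this
end
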